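/- arXiv:1803.06933 — 3 statements merged into one kernel-verified Lean document; each statement's English description precedes it below -/
import Mathlib

section
/- Let (X,d) be a metric space, m ≥ 1 an integer, φ a comparison function, and (f_i)_{i∈I} a family of functions f_i : X^m → X each of which is a φ-contraction. Then the family (f_i)_{i∈I} is uniformly Meir-Keeler. -/
/-- A comparison function `φ : [0,∞) → [0,∞)`: nondecreasing, right-continuous,
and `φ(t) < t` for `t > 0`. -/
def IsComparisonFun (φ : ℝ → ℝ) : Prop :=
  (∀ t : ℝ, 0 ≤ t → 0 ≤ φ t) ∧ MonotoneOn φ (Set.Ici 0) ∧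
    (∀ t : ℝ, 0 ≤ t → ContinuousWithinAt φ (Set.Ici t) t) ∧
    (∀ t : ℝ, 0 < t → φ t < t)

/-- STATEMENT 8: a family `(f_i)_{i∈I}` of `φ`-contractions `f_i : X^m → X`
(`φ` a comparison function, `X^m` with the maximum metric) is uniformly
Meir-Keeler. -/
theorem uniformly_meir_keeler_of_phi_contractions (X : Type) [MetricSpace X]
    (m : ℕ) (hm : 1 ≤ m) (I : Type) (φ : ℝ → ℝ) (hφ : IsComparisonFun φ)
    (f : I → (Fin m → X) → X)
    (hc : ∀ (i : I) (x y : Fin m → X), dist (f i x) (f i y) ≤ φ (dist x y)) :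
    ∀ ε : ℝ, 0 < ε → ∃ δ : ℝ, 0 < δ ∧ ∃ lam : ℝ, 0 < lam ∧
      ∀ (i : I) (x y : Fin m → X), dist x y < ε + δ →
        dist (f i x) (f i y) < ε - lam := by
  intro ε hε
  obtain ⟨hnn, hmono, hrc, hlt⟩ := hφ
  have hφε : φ ε < ε := hlt ε hε
  set lam : ℝ := (ε - φ ε) / 2 with hlam_def
  have hlam : 0 < lam := by rw [hlam_def]; linarith
  have hcε : φ ε < ε - lam := by
    have : ε - lam = (ε + φ ε) / 2 := by ring
    rw [this]; linarith
  -- right continuity at ε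
  have hct := (hrc ε hε.le)
  rw [Metric.continuousWithinAt_iff] at hct
  obtain ⟨δ, hδ, hδ'⟩ := hct lam hlam
  refine ⟨δ, hδ, lam, hlam, ?_⟩
  intro i x y hxy
  have hd0 : (0:ℝ) ≤ dist x y := dist_nonneg
  have key : φ (dist x y) < ε - lam := by
    rcases le_or_gt (dist x y) ε with h | h
    · exact lt_of_le_of_lt (hmono hd0 hε.le h) hcε
    · have := hδ' (x := dist x y) (le_of_lt h) (by
        rw [Real.dist_eq, abs_of_nonneg (by linarith)]; linarith)
      rw [Real.dist_eq] at this
      have habs : φ (dist x y) - φ ε < lam := lt_of_le_of_lt (le_abs_self _) this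
      have : ε - lam = (ε + φ ε) / 2 := by ring
      rw [this]; linarith [hlam_def ▸ hlam]
  exact lt_of_le_of_lt (hc i x y) key
end

section
/- Let F = ((X,d),(f_i)_{i∈I}) be a generalized possibly infinite iterated function system of order m with (X,d) complete and the family (f_i)_{i∈I} uniformly Meir-Keeler, and let A_F be its attractor. Then lim_{n→∞} sup_{α ∈ _nΩ} diam(f_α(A_F,…,A_F)) = 0, where f_α(A_F,…,A_F) is the image of (A_F)^{m^n} under f_α and diam denotes the diameter. -/
/-- A generalized possibly infinite iterated function system of order `m`:
a family of continuous maps `f_i : X^m → X` (with `X^m` carrying the maximum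
metric, i.e. the product metric on `Fin m → X`) which is bounded as a family. -/
structure GIFS (I : Type) (m : ℕ) (X : Type) [MetricSpace X] where
  f : I → (Fin m → X) → X
  cont : ∀ i : I, Continuous (f i)
  bddFam : ∀ B : Set (Fin m → X), Bornology.IsBounded B →
    Bornology.IsBounded (⋃ i : I, f i '' B)

/-- `Word I m k` encodes the set of words `_{k+1}Ω = Ω₁ × ⋯ × Ω_{k+1}`, via the
bijection `α ↔ (α¹, (α(1),…,α(m)))`. -/
def Word (I : Type) (m : ℕ) : ℕ → Type
  | 0 => I
  | k + 1 => I × (Fin m → Word I m k)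

/-- `XP Y m k` is `Y^{m^k}`. -/
def XP (Y : Type) (m : ℕ) : ℕ → Type
  | 0 => Y
  | k + 1 => Fin m → XP Y m k

/-- Given a family `base = (f_i)_{i∈I}`, `f_i : Y^m → Y`, extend it to words by
`f_{α¹α²…α^{k+1}}(x₁,…,x_m) = f_{α¹}(f_{α(1)}(x₁),…,f_{α(m)}(x_m))`. -/
def tExt {I Y : Type} {m : ℕ} (base : I → (Fin m → Y) → Y) :
    ∀ k : ℕ, Word I m k → XP Y m (k + 1) → Y
  | 0, i, x => base i (fun j => x j)
  | k + 1, w, x => base w.1 (fun j => tExt base k (w.2 j) (x j))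

/-- The set `A^{m^k} ⊆ X^{m^k}`. -/
def allInXP {X : Type} {m : ℕ} (A : Set X) : ∀ k : ℕ, Set (XP X m k)
  | 0 => A
  | k + 1 => {x | ∀ j : Fin m, x j ∈ allInXP A k}

/-- The fractal operator `F_F(B₁,…,B_m) = cl(∪_{i∈I} f_i(B₁ × ⋯ × B_m))`. -/
def FracOpF {I X : Type} {m : ℕ} [MetricSpace X] (f : I → (Fin m → X) → X)
    (B : Fin m → Set X) : Set X :=
  closure (⋃ i : I, f i '' Set.univ.pi B)

/-- Images of powers of `A` under the extended maps stay inside `A`. -/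
lemma tExt_mem_of_fix {I X : Type} {m : ℕ} [MetricSpace X] (F : GIFS I m X)
    (A : Set X) (hAfix : FracOpF F.f (fun _ => A) = A) :
    ∀ (k : ℕ) (w : Word I m k) (x : XP X m (k + 1)),
      x ∈ allInXP A (k + 1) → tExt F.f k w x ∈ A := by
  intro k
  induction k with
  | zero =>
    intro w x hx
    have h1 : F.f w (fun j => x j) ∈ ⋃ i : I, F.f i '' Set.univ.pi (fun _ => A) :=
      Set.mem_iUnion.2 ⟨w, ⟨fun j => x j, fun j _ => hx j, rfl⟩⟩
    have h2 : F.f w (fun j => x j) ∈ FracOpF F.f (fun _ => A) := subset_closure h1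
    rw [hAfix] at h2
    exact h2
  | succ k ih =>
    intro w x hx
    have h1 : F.f w.1 (fun j => tExt F.f k (w.2 j) (x j)) ∈
        ⋃ i : I, F.f i '' Set.univ.pi (fun _ => A) :=
      Set.mem_iUnion.2 ⟨w.1, ⟨fun j => tExt F.f k (w.2 j) (x j),
        fun j _ => ih (w.2 j) (x j) (hx j), rfl⟩⟩
    have h2 : _ ∈ FracOpF F.f (fun _ => A) := subset_closure h1
    rw [hAfix] at h2
    exact h2

/-- STATEMENT 13 (equation (1) of Remark 1.16): if `(X,d)` is complete, the family
`(f_i)_{i∈I}` is uniformly Meir-Keeler and `A_F` is the attractor of `F`, then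
`lim_{n→∞} sup_{α ∈ _nΩ} diam (f_α(A_F,…,A_F)) = 0` (here `Word I m n` encodes
`_{n+1}Ω`, `tExt F.f n w` is `f_w : X^{m^{n+1}} → X`, `allInXP A (n+1)` is
`A^{m^{n+1}}`, and the diameters are extended diameters in `ℝ≥0∞`). -/
theorem diam_tendsto_zero (I : Type) [Nonempty I] (m : ℕ) (hm : 1 ≤ m)
    (X : Type) [MetricSpace X] [CompleteSpace X] (F : GIFS I m X)
    (hUMK : ∀ ε : ℝ, 0 < ε → ∃ δ : ℝ, 0 < δ ∧ ∃ lam : ℝ, 0 < lam ∧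
      ∀ (i : I) (x y : Fin m → X), dist x y < ε + δ →
        dist (F.f i x) (F.f i y) < ε - lam)
    (A : Set X) (hAne : A.Nonempty) (hAcl : IsClosed A)
    (hAbd : Bornology.IsBounded A) (hAfix : FracOpF F.f (fun _ => A) = A) :
    Filter.Tendsto
      (fun n : ℕ => ⨆ w : Word I m n, EMetric.diam (tExt F.f n w '' allInXP A (n + 1)))
      Filter.atTop (nhds 0) := by
  set e : ℕ → ENNReal :=
    fun n => ⨆ w : Word I m n, EMetric.diam (tExt F.f n w '' allInXP A (n + 1)) with he
  -- images live in A
  have hsub : ∀ (n : ℕ) (w : Word I m n), tExt F.f n w '' allInXP A (n + 1) ⊆ A := by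
    rintro n w _ ⟨x, hx, rfl⟩
    exact tExt_mem_of_fix F A hAfix n w x hx
  have hbd : ∀ n, e n ≤ EMetric.diam A :=
    fun n => iSup_le fun w => EMetric.diam_mono (hsub n w)
  have hAdiam : EMetric.diam A ≠ ⊤ := hAbd.ediam_ne_top
  -- each f_i is nonexpansive
  have hne : ∀ (i : I) (x y : Fin m → X), dist (F.f i x) (F.f i y) ≤ dist x y := by
    intro i x y
    rcases eq_or_lt_of_le (dist_nonneg (x := x) (y := y)) with h0 | h0
    · have : x = y := dist_le_zero.1 h0.ge
      simp [this]
    · obtain ⟨δ, hδ, lam, hlam, h⟩ := hUMK (dist x y) h0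
      have := h i x y (by linarith)
      linarith
  -- antitone
  have hanti : Antitone e := by
    refine antitone_nat_of_succ_le (fun n => ?_)
    refine iSup_le fun w => EMetric.diam_le ?_
    rintro _ ⟨x, hx, rfl⟩ _ ⟨y, hy, rfl⟩
    show edist (F.f w.1 (fun j => tExt F.f n (w.2 j) (x j)))
        (F.f w.1 (fun j => tExt F.f n (w.2 j) (y j))) ≤ e n
    have huv : edist (fun j => tExt F.f n (w.2 j) (x j))
        (fun j => tExt F.f n (w.2 j) (y j)) ≤ e n := by
      refine edist_pi_le_iff.2 fun j => ?_
      calc edist (tExt F.f n (w.2 j) (x j)) (tExt F.f n (w.2 j) (y j))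
          ≤ EMetric.diam (tExt F.f n (w.2 j) '' allInXP A (n + 1)) :=
            EMetric.edist_le_diam_of_mem ⟨x j, hx j, rfl⟩ ⟨y j, hy j, rfl⟩
        _ ≤ e n := le_iSup (fun w' : Word I m n =>
            EMetric.diam (tExt F.f n w' '' allInXP A (n + 1))) (w.2 j)
    calc edist (F.f w.1 _) (F.f w.1 _)
        ≤ edist (fun j => tExt F.f n (w.2 j) (x j))
          (fun j => tExt F.f n (w.2 j) (y j)) := by
          rw [edist_dist, edist_dist]
          exact ENNReal.ofReal_le_ofReal (hne _ _ _)
      _ ≤ e n := huv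
  -- the limit is the infimum
  have htend : Filter.Tendsto e Filter.atTop (nhds (⨅ n, e n)) := tendsto_atTop_iInf hanti
  -- the infimum is zero
  have hinf : (⨅ n, e n) = 0 := by
    by_contra hL0
    set L := ⨅ n, e n with hL
    have hLtop : L ≠ ⊤ := ((iInf_le e 0).trans (hbd 0)).trans_lt hAdiam.lt_top |>.ne
    have hε : 0 < L.toReal := ENNReal.toReal_pos hL0 hLtop
    obtain ⟨δ, hδ, lam, hlam, h⟩ := hUMK L.toReal hε
    have hlt : L < L + ENNReal.ofReal δ :=
      ENNReal.lt_add_right hLtop (by simp [hδ, hδ.le, ENNReal.ofReal_pos.2 hδ |>.ne'])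
    obtain ⟨n, hn⟩ := iInf_lt_iff.1 (hL ▸ hlt : (⨅ n, e n) < L + ENNReal.ofReal δ)
    have hn' : e n < ENNReal.ofReal (L.toReal + δ) := by
      rwa [ENNReal.ofReal_add hε.le hδ.le, ENNReal.ofReal_toReal hLtop]
    -- the Meir-Keeler step
    have hstep : e (n + 1) ≤ ENNReal.ofReal (L.toReal - lam) := by
      refine iSup_le fun w => EMetric.diam_le ?_
      rintro _ ⟨x, hx, rfl⟩ _ ⟨y, hy, rfl⟩
      show edist (F.f w.1 (fun j => tExt F.f n (w.2 j) (x j)))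
          (F.f w.1 (fun j => tExt F.f n (w.2 j) (y j))) ≤ _
      have hcomp : ∀ j : Fin m,
          dist (tExt F.f n (w.2 j) (x j)) (tExt F.f n (w.2 j) (y j)) < L.toReal + δ := by
        intro j
        refine edist_lt_ofReal.1 ?_
        calc edist (tExt F.f n (w.2 j) (x j)) (tExt F.f n (w.2 j) (y j))
            ≤ EMetric.diam (tExt F.f n (w.2 j) '' allInXP A (n + 1)) :=
              EMetric.edist_le_diam_of_mem ⟨x j, hx j, rfl⟩ ⟨y j, hy j, rfl⟩
          _ ≤ e n := le_iSup (fun w' : Word I m n =>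
              EMetric.diam (tExt F.f n w' '' allInXP A (n + 1))) (w.2 j)
          _ < ENNReal.ofReal (L.toReal + δ) := hn'
      have hdist : dist (fun j => tExt F.f n (w.2 j) (x j))
          (fun j => tExt F.f n (w.2 j) (y j)) < L.toReal + δ :=
        (dist_pi_lt_iff (by linarith)).2 hcomp
      have := h w.1 _ _ hdist
      rw [edist_dist]
      exact ENNReal.ofReal_le_ofReal this.le
    have h1 : L ≤ ENNReal.ofReal (L.toReal - lam) := (iInf_le e (n + 1)).trans hstep
    have h2 : ENNReal.ofReal (L.toReal - lam) < L := by
      conv_rhs => rw [← ENNReal.ofReal_toReal hLtop]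
      exact (ENNReal.ofReal_lt_ofReal_iff hε).2 (by linarith)
    exact absurd h1 h2.not_ge
  rw [← hinf]
  exact htend
end

section
/- Let X = [0,1] with the euclidean metric and, for each n ∈ ℕ, let f_n : [0,1] × [0,1] → [0,1] be defined by f_n(x,y) = (x+y)/2^{n+2} + 1/2^{n+1}. Then the family (f_n)_{n∈ℕ} is uniformly Meir-Keeler: for every ε > 0, taking δ = ε/3 and λ = ε/9, one has |f_n(u) − f_n(v)| < ε − λ for every n ∈ ℕ and all u,v ∈ [0,1]² with d_max(u,v) < ε + δ. Moreover, the attractor of the GIFS F = (([0,1],d),(f_n)_{n∈ℕ}) of order 2 is A_F = [0,1]. -/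
/-- `f_n(x,y) = (x+y)/2^{n+2} + 1/2^{n+1}` on `[0,1]² → [0,1]`. -/
noncomputable def fEx (n : ℕ) (p : Fin 2 → unitInterval) : unitInterval :=
  ⟨((p 0 : ℝ) + (p 1 : ℝ)) / 2 ^ (n + 2) + 1 / 2 ^ (n + 1), by
    have h00 : (0 : ℝ) ≤ (p 0 : ℝ) := (p 0).2.1
    have h01 : (p 0 : ℝ) ≤ 1 := (p 0).2.2
    have h10 : (0 : ℝ) ≤ (p 1 : ℝ) := (p 1).2.1
    have h11 : (p 1 : ℝ) ≤ 1 := (p 1).2.2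
    have h1 : (1 : ℝ) ≤ 2 ^ n := one_le_pow₀ (by norm_num)
    constructor
    · exact add_nonneg (div_nonneg (add_nonneg h00 h10) (by positivity)) (by positivity)
    · have key : ((p 0 : ℝ) + (p 1 : ℝ)) / 2 ^ (n + 2) + 1 / 2 ^ (n + 1)
          ≤ 2 / 2 ^ (n + 2) + 1 / 2 ^ (n + 1) := by
        gcongr
        linarith
      have eq1 : (2 : ℝ) / 2 ^ (n + 2) + 1 / 2 ^ (n + 1) = 1 / 2 ^ n := by
        field_simp
        ring
      have le1 : (1 : ℝ) / 2 ^ n ≤ 1 := by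
        rw [div_le_one (by positivity)]
        exact h1
      linarith⟩

lemma fEx_coe (n : ℕ) (p : Fin 2 → unitInterval) :
    ((fEx n p : unitInterval) : ℝ) = ((p 0 : ℝ) + (p 1 : ℝ)) / 2 ^ (n + 2) + 1 / 2 ^ (n + 1) :=
  rfl

/-- Membership of `fEx n p` in the fractal operator's value. -/
lemma fEx_mem_fracOp {B : Fin 2 → Set unitInterval} (n : ℕ) (p : Fin 2 → unitInterval)
    (hp : ∀ i, p i ∈ B i) : fEx n p ∈ FracOpF fEx B := by
  apply subset_closure
  exact Set.mem_iUnion.2 ⟨n, Set.mem_image_of_mem _ (fun i _ => hp i)⟩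

/-- Every positive element of `[0,1]` is `fEx n (x,x)` for some `n`, `x`. -/
lemma exists_fEx_eq (t : unitInterval) (ht : 0 < (t : ℝ)) :
    ∃ (n : ℕ) (x : unitInterval), fEx n (fun _ => x) = t := by
  have ht1 : (t : ℝ) ≤ 1 := t.2.2
  have hex : ∃ n : ℕ, (1 : ℝ) / 2 ^ (n + 1) ≤ (t : ℝ) := by
    obtain ⟨m, hm⟩ := exists_pow_lt_of_lt_one ht (by norm_num : (1/2 : ℝ) < 1)
    refine ⟨m, ?_⟩
    have : ((1:ℝ)/2) ^ (m+1) ≤ ((1:ℝ)/2) ^ m := by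
      apply pow_le_pow_of_le_one (by norm_num) (by norm_num)
      omega
    have h2 : ((1:ℝ)/2) ^ (m+1) = 1 / 2 ^ (m+1) := by
      rw [div_pow]; norm_num
    linarith [h2 ▸ this]
  classical
  set n := Nat.find hex with hn
  have hlow : (1 : ℝ) / 2 ^ (n + 1) ≤ (t : ℝ) := Nat.find_spec hex
  have hhigh : (t : ℝ) ≤ 1 / 2 ^ n := by
    rcases Nat.eq_zero_or_pos n with h0 | h0
    · rw [h0]; simpa using ht1
    · have := Nat.find_min hex (m := n - 1) (by omega)
      push_neg at this
      have hrw : n - 1 + 1 = n := by omega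
      rw [hrw] at this
      linarith
  set s : ℝ := 2 ^ (n + 2) * ((t : ℝ) - 1 / 2 ^ (n + 1)) with hs
  have hpow : (0:ℝ) < 2 ^ (n+1) := by positivity
  have hpow2 : (0:ℝ) < 2 ^ (n+2) := by positivity
  have hs0 : 0 ≤ s := by
    apply mul_nonneg (le_of_lt hpow2)
    linarith
  have hs2 : s ≤ 2 := by
    have : (t : ℝ) - 1 / 2 ^ (n + 1) ≤ 1 / 2 ^ (n + 1) := by
      have h1 : (1:ℝ) / 2 ^ n = 2 / 2 ^ (n+1) := by
        rw [pow_succ]; field_simp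
      rw [h1] at hhigh
      have h2 : (2:ℝ) / 2 ^ (n+1) = 2 * (1 / 2 ^ (n+1)) := by ring
      rw [h2] at hhigh
      linarith
    calc s ≤ 2 ^ (n + 2) * (1 / 2 ^ (n + 1)) := by
            apply mul_le_mul_of_nonneg_left this (le_of_lt hpow2)
      _ = 2 := by rw [pow_succ]; field_simp
  refine ⟨n, ⟨s / 2, by constructor <;> linarith⟩, ?_⟩
  apply Subtype.ext
  show (s/2 + s/2) / 2 ^ (n + 2) + 1 / 2 ^ (n + 1) = (t : ℝ)
  rw [hs]
  field_simp
  ring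

/-- `fEx n (x,x) → 0` as `n → ∞`. -/
lemma tendsto_fEx (x : unitInterval) :
    Filter.Tendsto (fun n => fEx n (fun _ => x)) Filter.atTop (nhds 0) := by
  rw [tendsto_subtype_rng]
  have h0 : ∀ n : ℕ, ((fEx n (fun _ => x) : unitInterval) : ℝ) ≤ (1/2:ℝ) ^ n := by
    intro n
    rw [fEx_coe]
    have hx : (x : ℝ) ≤ 1 := x.2.2
    have h1 : ((1:ℝ)/2) ^ n = 1 / 2 ^ n := by rw [div_pow]; norm_num
    have h2 : ((x : ℝ) + (x : ℝ)) / 2 ^ (n + 2) + 1 / 2 ^ (n + 1)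
        ≤ 2 / 2 ^ (n + 2) + 1 / 2 ^ (n + 1) := by gcongr; linarith
    have h3 : (2:ℝ) / 2 ^ (n + 2) + 1 / 2 ^ (n + 1) = 1 / 2 ^ n := by
      field_simp; ring
    rw [h1]; linarith
  have hge : ∀ n : ℕ, (0:ℝ) ≤ ((fEx n (fun _ => x) : unitInterval) : ℝ) := fun n =>
    (fEx n (fun _ => x)).2.1
  have := tendsto_pow_atTop_nhds_zero_of_lt_one (by norm_num : (0:ℝ) ≤ 1/2)
    (by norm_num : (1/2:ℝ) < 1)
  have hsq := squeeze_zero hge h0 this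
  have : ((0 : unitInterval) : ℝ) = 0 := rfl
  rw [this]
  exact hsq

/-- STATEMENT 19 (the example of Section 5): the maps `f_n` form a GIFS of order 2
on `[0,1]` (in particular each `f_n` is continuous); the family `(f_n)_{n∈ℕ}` is
uniformly Meir-Keeler with `δ_ε = ε/3` and `λ_ε = ε/9`; and the attractor of
`F = (([0,1],d),(f_n)_{n∈ℕ})` is `A_F = [0,1]`, i.e. the whole space `[0,1]` is
the unique nonempty closed bounded fixed point of the fractal operator. -/
theorem example_uniformly_meir_keeler_and_attractor :
    (∀ n : ℕ, Continuous (fEx n)) ∧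
    (∀ ε : ℝ, 0 < ε → ∀ (n : ℕ) (u v : Fin 2 → unitInterval),
      dist u v < ε + ε / 3 → dist (fEx n u) (fEx n v) < ε - ε / 9) ∧
    FracOpF fEx (fun _ => (Set.univ : Set unitInterval)) = Set.univ ∧
    (∀ A : Set unitInterval, A.Nonempty → IsClosed A → Bornology.IsBounded A →
      FracOpF fEx (fun _ => A) = A → A = Set.univ) := by
  refine ⟨?cont, ?mk, ?fix, ?uniq⟩
  case cont =>
    intro n
    apply Continuous.subtype_mk
    exact (((continuous_subtype_val.comp (continuous_apply 0)).add
      (continuous_subtype_val.comp (continuous_apply 1))).div_const _).add continuous_const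
  case mk =>
    intro ε hε n u v huv
    have h0 := dist_le_pi_dist u v 0
    have h1 := dist_le_pi_dist u v 1
    rw [Subtype.dist_eq, Real.dist_eq] at h0 h1
    rw [Subtype.dist_eq, Real.dist_eq, fEx_coe, fEx_coe]
    have hkey : |((u 0 : ℝ) + (u 1 : ℝ)) / 2 ^ (n + 2) + 1 / 2 ^ (n + 1)
        - (((v 0 : ℝ) + (v 1 : ℝ)) / 2 ^ (n + 2) + 1 / 2 ^ (n + 1))|
        ≤ (|(u 0 : ℝ) - (v 0 : ℝ)| + |(u 1 : ℝ) - (v 1 : ℝ)|) / 2 ^ (n + 2) := by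
      have heq : ((u 0 : ℝ) + (u 1 : ℝ)) / 2 ^ (n + 2) + 1 / 2 ^ (n + 1)
          - (((v 0 : ℝ) + (v 1 : ℝ)) / 2 ^ (n + 2) + 1 / 2 ^ (n + 1))
          = (((u 0 : ℝ) - (v 0 : ℝ)) + ((u 1 : ℝ) - (v 1 : ℝ))) / 2 ^ (n + 2) := by
        ring
      rw [heq, abs_div, abs_of_pos (by positivity : (0:ℝ) < 2 ^ (n+2))]
      gcongr
      exact abs_add_le _ _
    have hp4 : (4:ℝ) ≤ 2 ^ (n + 2) := by
      calc (4:ℝ) = 2 ^ 2 := by norm_num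
        _ ≤ 2 ^ (n + 2) := by apply pow_le_pow_right₀ (by norm_num); omega
    have hd : (|(u 0 : ℝ) - (v 0 : ℝ)| + |(u 1 : ℝ) - (v 1 : ℝ)|) / 2 ^ (n + 2)
        ≤ (|(u 0 : ℝ) - (v 0 : ℝ)| + |(u 1 : ℝ) - (v 1 : ℝ)|) / 4 := by
      gcongr
    have hd2 : |(u 0 : ℝ) - (v 0 : ℝ)| + |(u 1 : ℝ) - (v 1 : ℝ)| ≤ 2 * dist u v :=
      by linarith
    have hdvnn : (0:ℝ) ≤ dist u v := dist_nonneg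
    calc |((u 0 : ℝ) + (u 1 : ℝ)) / 2 ^ (n + 2) + 1 / 2 ^ (n + 1)
        - (((v 0 : ℝ) + (v 1 : ℝ)) / 2 ^ (n + 2) + 1 / 2 ^ (n + 1))|
        ≤ (|(u 0 : ℝ) - (v 0 : ℝ)| + |(u 1 : ℝ) - (v 1 : ℝ)|) / 4 := le_trans hkey hd
      _ ≤ 2 * dist u v / 4 := by linarith
      _ < ε - ε / 9 := by linarith
  case fix =>
    apply Set.eq_univ_of_forall
    intro t
    rcases eq_or_lt_of_le t.2.1 with h0 | h0
    · have ht0 : t = 0 := Subtype.ext (by simpa using h0.symm)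
      rw [ht0]
      unfold FracOpF
      apply isClosed_closure.mem_of_tendsto (tendsto_fEx 0)
      filter_upwards with n
      exact subset_closure (Set.mem_iUnion.2 ⟨n, Set.mem_image_of_mem _ (fun i _ => trivial)⟩)
    · obtain ⟨n, x, hx⟩ := exists_fEx_eq t h0
      rw [← hx]
      exact fEx_mem_fracOp n _ (fun i => trivial)
  case uniq =>
    intro A ⟨a, ha⟩ hclosed _ hfix
    have hsub : ∀ (n : ℕ) (p : Fin 2 → unitInterval), (∀ i, p i ∈ A) → fEx n p ∈ A := by
      intro n p hp
      rw [← hfix]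
      exact fEx_mem_fracOp n p hp
    have h0A : (0 : unitInterval) ∈ A := by
      apply hclosed.mem_of_tendsto (tendsto_fEx a)
      filter_upwards with n
      exact hsub n _ (fun i => ha)
    have key : ∀ k : ℕ, ∀ t : unitInterval, ∃ b ∈ A, dist t b ≤ (1/2:ℝ) ^ k := by
      intro k
      induction k with
      | zero =>
        intro t
        refine ⟨0, h0A, ?_⟩
        rw [Subtype.dist_eq, Real.dist_eq]
        have := t.2.1; have := t.2.2
        simp only [Set.Icc.coe_zero, sub_zero, pow_zero]
        rw [abs_of_nonneg (by linarith)]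
        linarith
      | succ k ih =>
        intro t
        rcases eq_or_lt_of_le t.2.1 with h0 | h0
        · have ht0 : t = 0 := Subtype.ext (by simpa using h0.symm)
          exact ⟨t, by rw [ht0]; exact h0A, by rw [dist_self]; positivity⟩
        · obtain ⟨n, x, hx⟩ := exists_fEx_eq t h0
          obtain ⟨b, hbA, hb⟩ := ih x
          refine ⟨fEx n (fun _ => b), hsub n _ (fun i => hbA), ?_⟩
          rw [← hx, Subtype.dist_eq, Real.dist_eq, fEx_coe, fEx_coe]
          rw [Subtype.dist_eq, Real.dist_eq] at hb
          have heq : ((x : ℝ) + (x : ℝ)) / 2 ^ (n + 2) + 1 / 2 ^ (n + 1)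
              - (((b : ℝ) + (b : ℝ)) / 2 ^ (n + 2) + 1 / 2 ^ (n + 1))
              = 2 * ((x : ℝ) - (b : ℝ)) / 2 ^ (n + 2) := by ring
          have habs2 : |2 * ((x : ℝ) - (b : ℝ)) / 2 ^ (n + 2)|
              = 2 * |(x : ℝ) - (b : ℝ)| / 2 ^ (n + 2) := by
            rw [abs_div, abs_mul, abs_of_pos (by positivity : (0:ℝ) < 2 ^ (n+2))]
            norm_num
          rw [heq, habs2]
          have hp4 : (4:ℝ) ≤ 2 ^ (n + 2) := by
            calc (4:ℝ) = 2 ^ 2 := by norm_num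
              _ ≤ 2 ^ (n + 2) := by apply pow_le_pow_right₀ (by norm_num); omega
          have habs : (0:ℝ) ≤ |(x : ℝ) - (b : ℝ)| := abs_nonneg _
          calc 2 * |(x : ℝ) - (b : ℝ)| / 2 ^ (n + 2)
              ≤ 2 * |(x : ℝ) - (b : ℝ)| / 4 := by gcongr
            _ = |(x : ℝ) - (b : ℝ)| / 2 := by ring
            _ ≤ (1/2:ℝ) ^ k / 2 := by linarith
            _ = (1/2:ℝ) ^ (k + 1) := by rw [pow_succ]; ring
    apply Set.eq_univ_of_forall
    intro t
    rw [← hclosed.closure_eq]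
    rw [Metric.mem_closure_iff]
    intro ε hε
    obtain ⟨k, hk⟩ := exists_pow_lt_of_lt_one hε (by norm_num : (1/2:ℝ) < 1)
    obtain ⟨b, hbA, hb⟩ := key k t
    exact ⟨b, hbA, lt_of_le_of_lt hb hk⟩
end
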